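/- Let l be a positive integer and let G be the presented group with generators gₙ (n ∈ ℤ) and relations gₙ = g_{n+1}^l for all n ∈ ℤ. Then G is isomorphic to the additive subgroup ℤ[1/l] = {x ∈ ℚ : ∃ a ∈ ℤ, ∃ n ∈ ℕ, x = a / lⁿ} of the rationals (viewed as a group, i.e. to Multiplicative of this additive subgroup), an isomorphism being determined by gₙ ↦ 1/lⁿ. Moreover, if l ≥ 2 then G has exactly two positive cones. -/

import Mathlib

/-- `P` is a positive cone of the group `G`: it is closed under multiplication and
`G` is the disjoint union of `P`, `P⁻¹` and `{1}`. -/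
def IsPositiveCone {G : Type*} [Group G] (P : Set G) : Prop :=
  (∀ a ∈ P, ∀ b ∈ P, a * b ∈ P) ∧
  (∀ g : G, g ∈ P ∨ g⁻¹ ∈ P ∨ g = 1) ∧
  (∀ g ∈ P, g⁻¹ ∉ P) ∧ (1 : G) ∉ P

/-- The relators `gₙ * g_{n+1}^{-l}` of the presented group. -/
def zRels (l : ℕ) : Set (FreeGroup ℤ) :=
  {r | ∃ n : ℤ, r = FreeGroup.of n * FreeGroup.of (n + 1) ^ (-(l : ℤ))}

/-- The presented group with generators `gₙ (n : ℤ)` and relations `gₙ = g_{n+1}^l`. -/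
abbrev Gz (l : ℕ) : Type := PresentedGroup (zRels l)

/-- The image `gₙ` in the presented group of the `n`-th generator. -/
def gz (l : ℕ) (n : ℤ) : Gz l := PresentedGroup.of n

/-- The additive subgroup `ℤ[1/l] = {a / lⁿ : a ∈ ℤ, n ∈ ℕ}` of `ℚ`. -/
def zInvl (l : ℕ) (hl : 0 < l) : AddSubgroup ℚ where
  carrier := {x : ℚ | ∃ (a : ℤ) (n : ℕ), x = (a : ℚ) / (l : ℚ) ^ n}
  zero_mem' := ⟨0, 0, by norm_num⟩
  add_mem' := by
    rintro x y ⟨a, n, rfl⟩ ⟨b, p, rfl⟩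
    refine ⟨a * (l : ℤ) ^ p + b * (l : ℤ) ^ n, n + p, ?_⟩
    have hl' : ((l : ℚ)) ≠ 0 := by positivity
    rw [div_add_div _ _ (pow_ne_zero n hl') (pow_ne_zero p hl'), pow_add]
    push_cast
    ring
  neg_mem' := by
    rintro x ⟨a, n, rfl⟩
    exact ⟨-a, n, by push_cast; ring⟩

namespace Stmt16Aux

variable (l : ℕ) (hl : 0 < l)

lemma rel_gz (n : ℤ) : gz l n = gz l (n + 1) ^ (l : ℕ) := by
  have hmem : (FreeGroup.of n * FreeGroup.of (n + 1) ^ (-(l : ℤ)) : FreeGroup ℤ) ∈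
      Subgroup.normalClosure (zRels l) :=
    Subgroup.subset_normalClosure ⟨n, rfl⟩
  have h1 : PresentedGroup.mk (zRels l) (FreeGroup.of n * FreeGroup.of (n + 1) ^ (-(l : ℤ))) = 1 :=
    (QuotientGroup.eq_one_iff _).mpr hmem
  rw [map_mul, map_zpow] at h1
  have : gz l n * (gz l (n + 1)) ^ (-(l : ℤ)) = 1 := h1
  have h2 : gz l n = (gz l (n + 1)) ^ ((l : ℤ)) := by
    rw [zpow_neg] at this
    exact eq_of_mul_inv_eq_one this
  rw [h2, zpow_natCast]

lemma gz_pow (n : ℤ) (k : ℕ) : gz l n = gz l (n + k) ^ (l ^ k) := by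
  induction k with
  | zero => simp
  | succ k ih =>
      rw [ih, rel_gz l (n + k), ← pow_mul]
      have : (n + k) + 1 = n + ((k : ℕ) + 1 : ℕ) := by push_cast; ring
      rw [this, pow_succ, mul_comm]

include hl in
lemma hlQ : ((l : ℚ)) ≠ 0 := by exact_mod_cast hl.ne'

include hl in
lemma el_rep (n : ℤ) :
    (l : ℚ) ^ (-n) = (((l : ℤ) ^ ((-n).toNat) : ℤ) : ℚ) / (l : ℚ) ^ (n.toNat) := by
  push_cast
  rw [← zpow_natCast (l:ℚ) ((-n).toNat), ← zpow_natCast (l:ℚ) (n.toNat),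
    ← zpow_sub₀ (hlQ l hl)]
  congr 1
  omega

def el (n : ℤ) : zInvl l hl := ⟨(l : ℚ) ^ (-n), ⟨(l : ℤ) ^ ((-n).toNat), n.toNat, el_rep l hl n⟩⟩

lemma el_rel (n : ℤ) : el l hl n = (l : ℤ) • el l hl (n + 1) := by
  apply Subtype.ext
  have key : (l : ℚ) * (l : ℚ) ^ (-(n+1)) = (l : ℚ) ^ (-n) := by
    rw [show -n = 1 + (-(n+1)) by ring, zpow_add₀ (hlQ l hl), zpow_one]
  have : ((((l:ℤ) • el l hl (n+1) : zInvl l hl)) : ℚ) = (l : ℚ) * (l:ℚ) ^ (-(n+1)) := by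
    push_cast [el, zsmul_eq_mul]; ring_nf
  rw [this, key]
  rfl

include hl in
lemma frel : ∀ r ∈ zRels l, FreeGroup.lift
    (fun n : ℤ => Multiplicative.ofAdd (el l hl n)) r = 1 := by
  rintro r ⟨n, rfl⟩
  rw [map_mul, map_zpow, FreeGroup.lift_apply_of, FreeGroup.lift_apply_of]
  rw [← ofAdd_zsmul, ← ofAdd_add, ← ofAdd_zero]
  congr 1
  rw [el_rel l hl n]
  simp

def φ : Gz l →* Multiplicative (zInvl l hl) := PresentedGroup.toGroup (frel l hl)

lemma φ_gz (n : ℤ) : φ l hl (gz l n) = Multiplicative.ofAdd (el l hl n) :=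
  PresentedGroup.toGroup.of _

include hl in
lemma wd_le {a b : ℤ} {n m : ℕ} (hnm : n ≤ m)
    (h : (a : ℚ) / (l : ℚ) ^ n = (b : ℚ) / (l : ℚ) ^ m) :
    gz l n ^ a = gz l m ^ b := by
  have hb : b = a * (l : ℤ) ^ (m - n) := by
    have hQ : (b : ℚ) = (a : ℚ) * (l : ℚ) ^ (m - n) := by
      have hln : ((l:ℚ)) ^ n ≠ 0 := pow_ne_zero _ (hlQ l hl)
      have hlm : ((l:ℚ)) ^ m ≠ 0 := pow_ne_zero _ (hlQ l hl)
      have hpow : (l : ℚ) ^ m = (l : ℚ) ^ n * (l : ℚ) ^ (m - n) := by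
        rw [← pow_add]; congr 1; omega
      field_simp at h
      rw [hpow] at h
      have h2 : (a : ℚ) * (l : ℚ) ^ (m - n) * (l : ℚ) ^ n = (b : ℚ) * (l : ℚ) ^ n := by
        linear_combination h
      exact (mul_right_cancel₀ hln h2).symm
    exact_mod_cast hQ
  have hg : gz l n = gz l m ^ (l ^ (m - n)) := by
    have := gz_pow l (n : ℤ) (m - n)
    rwa [show ((n : ℤ) + ((m - n : ℕ) : ℤ)) = (m : ℤ) by omega] at this
  rw [hg, hb, ← zpow_natCast (gz l m) (l ^ (m-n)), ← zpow_mul]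
  congr 1
  push_cast
  ring

include hl in
lemma wd {a b : ℤ} {n m : ℕ}
    (h : (a : ℚ) / (l : ℚ) ^ n = (b : ℚ) / (l : ℚ) ^ m) :
    gz l n ^ a = gz l m ^ b := by
  rcases le_total n m with hnm | hnm
  · exact wd_le l hl hnm h
  · exact (wd_le l hl hnm h.symm).symm

noncomputable def ψ₀ (x : zInvl l hl) : Gz l :=
  gz l (x.2.choose_spec.choose : ℕ) ^ x.2.choose

lemma ψ₀_spec (x : zInvl l hl) {a : ℤ} {n : ℕ} (h : (x : ℚ) = (a : ℚ) / (l : ℚ) ^ n) :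
    ψ₀ l hl x = gz l n ^ a := by
  apply wd l hl
  rw [← x.2.choose_spec.choose_spec, h]

noncomputable def ψ : Multiplicative (zInvl l hl) →* Gz l :=
  MonoidHom.mk' (fun x => ψ₀ l hl (Multiplicative.toAdd x)) (by
    intro x y
    obtain ⟨a, n, hx⟩ := (Multiplicative.toAdd x).2
    obtain ⟨b, m, hy⟩ := (Multiplicative.toAdd y).2
    have hxy : ((Multiplicative.toAdd (x * y) : zInvl l hl) : ℚ) =
        ((a * (l:ℤ) ^ m + b * (l:ℤ) ^ n : ℤ) : ℚ) / (l : ℚ) ^ (n + m) := by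
      have : ((Multiplicative.toAdd (x * y) : zInvl l hl) : ℚ) =
          ((Multiplicative.toAdd x : zInvl l hl) : ℚ) +
          ((Multiplicative.toAdd y : zInvl l hl) : ℚ) := by
        simp
      rw [this, hx, hy]
      have hln : ((l:ℚ)) ≠ 0 := hlQ l hl
      rw [div_add_div _ _ (pow_ne_zero n hln) (pow_ne_zero m hln), pow_add]
      push_cast
      ring
    show ψ₀ l hl (Multiplicative.toAdd (x * y)) =
        ψ₀ l hl (Multiplicative.toAdd x) * ψ₀ l hl (Multiplicative.toAdd y)
    rw [ψ₀_spec l hl _ hxy, ψ₀_spec l hl _ hx, ψ₀_spec l hl _ hy]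
    have h1 : gz l n = gz l (n + m : ℕ) ^ (l ^ m) := by
      have := gz_pow l (n : ℤ) m
      rwa [show ((n:ℤ) + (m:ℤ)) = ((n + m : ℕ) : ℤ) by push_cast; ring] at this
    have h2 : gz l m = gz l (n + m : ℕ) ^ (l ^ n) := by
      have := gz_pow l (m : ℤ) n
      rwa [show ((m:ℤ) + (n:ℤ)) = ((n + m : ℕ) : ℤ) by push_cast; ring] at this
    rw [h1, h2, ← zpow_natCast (gz l ((n + m : ℕ) : ℤ)) (l ^ m), ← zpow_natCast (gz l ((n + m : ℕ) : ℤ)) (l ^ n),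
      ← zpow_mul, ← zpow_mul, ← zpow_add]
    congr 1
    push_cast
    ring)

lemma left_inv : (ψ l hl).comp (φ l hl) = MonoidHom.id (Gz l) := by
  apply PresentedGroup.ext
  intro n
  show ψ l hl (φ l hl (gz l n)) = gz l n
  rw [φ_gz]
  have hrep : ((Multiplicative.toAdd (Multiplicative.ofAdd (el l hl n)) : zInvl l hl) : ℚ) =
      (((l : ℤ) ^ ((-n).toNat) : ℤ) : ℚ) / (l : ℚ) ^ (n.toNat) := el_rep l hl n
  show ψ₀ l hl _ = gz l n
  rw [ψ₀_spec l hl _ hrep]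
  have := gz_pow l n ((-n).toNat)
  rw [show (n + (((-n).toNat : ℕ) : ℤ)) = ((n.toNat : ℕ) : ℤ) by omega] at this
  rw [← zpow_natCast (gz l ((n.toNat : ℕ) : ℤ)) (l ^ ((-n).toNat))] at this
  rw [this]
  congr 1

lemma right_inv : (φ l hl).comp (ψ l hl) = MonoidHom.id _ := by
  refine MonoidHom.ext fun x => ?_
  show φ l hl (ψ₀ l hl (Multiplicative.toAdd x)) = x
  obtain ⟨a, n, hx⟩ := (Multiplicative.toAdd x).2
  rw [ψ₀_spec l hl _ hx, map_zpow, φ_gz]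
  apply Multiplicative.toAdd.injective
  apply Subtype.ext
  rw [toAdd_zpow]
  show ((a • el l hl n : zInvl l hl) : ℚ) = _
  have : ((a • el l hl n : zInvl l hl) : ℚ) = (a : ℚ) * (l : ℚ) ^ (-(n:ℤ)) := by
    push_cast [el, zsmul_eq_mul]; ring
  rw [this, hx]
  rw [zpow_neg, zpow_natCast]
  ring

noncomputable def e : Gz l ≃* Multiplicative (zInvl l hl) :=
  MonoidHom.toMulEquiv (φ l hl) (ψ l hl) (left_inv l hl) (right_inv l hl)

lemma e_gz (n : ℤ) :
    ((Multiplicative.toAdd (e l hl (gz l n)) : zInvl l hl) : ℚ) = 1 / (l : ℚ) ^ n := by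
  show ((Multiplicative.toAdd (φ l hl (gz l n)) : zInvl l hl) : ℚ) = _
  rw [φ_gz]
  show (l : ℚ) ^ (-n) = _
  rw [zpow_neg, one_div]

noncomputable def τ (g : Gz l) : ℚ := ((Multiplicative.toAdd (φ l hl g) : zInvl l hl) : ℚ)

lemma τ_mul (g h : Gz l) : τ l hl (g * h) = τ l hl g + τ l hl h := by
  simp [τ, map_mul]

lemma τ_one : τ l hl 1 = 0 := by simp [τ]

lemma τ_inv (g : Gz l) : τ l hl g⁻¹ = -τ l hl g := by simp [τ]

lemma τ_pow (g : Gz l) (k : ℕ) : τ l hl (g ^ k) = k * τ l hl g := by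
  simp [τ, map_pow, toAdd_pow]

lemma τ_inj : Function.Injective (τ l hl) := by
  intro g h hgh
  have hφ : Function.Injective (φ l hl) := by
    intro a b hab
    have := congrArg (ψ l hl) hab
    simpa using (DFunLike.congr_fun (left_inv l hl) a).symm.trans
      (this.trans (DFunLike.congr_fun (left_inv l hl) b))
  apply hφ
  apply Multiplicative.toAdd.injective
  exact Subtype.ext hgh

lemma τ_gz0 : τ l hl (gz l 0) = 1 := by
  show ((Multiplicative.toAdd (φ l hl (gz l 0)) : zInvl l hl) : ℚ) = 1
  rw [φ_gz]
  show (l : ℚ) ^ (-(0:ℤ)) = 1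
  simp

lemma τ_ne_iff (g : Gz l) : τ l hl g ≠ 0 ↔ g ≠ 1 := by
  constructor
  · rintro h rfl; exact h (τ_one l hl)
  · intro h hc
    exact h (τ_inj l hl (hc.trans (τ_one l hl).symm))



lemma cone_pow {G : Type*} [Group G] {P : Set G} (hP : IsPositiveCone P) {g : G}
    (hg : g ∈ P) {k : ℕ} (hk : 0 < k) : g ^ k ∈ P := by
  induction k with
  | zero => omega
  | succ k ih =>
      rcases Nat.eq_zero_or_pos k with rfl | hk'
      · simpa using hg
      · rw [pow_succ]
        exact hP.1 _ (ih hk') _ hg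

lemma ratio_nat {x y : ℚ} (hx : 0 < x) (hy : 0 < y) :
    ∃ p q : ℕ, 0 < p ∧ 0 < q ∧ (q : ℚ) * x = (p : ℚ) * y := by
  set r : ℚ := x / y with hr
  have hrpos : 0 < r := div_pos hx hy
  have hrnum : 0 < r.num := Rat.num_pos.mpr hrpos
  refine ⟨r.num.toNat, r.den, by omega, r.pos, ?_⟩
  have hden : ((r.den : ℚ)) ≠ 0 := by exact_mod_cast r.den_nz
  have key : (r.den : ℚ) * r = (r.num : ℚ) := by
    rw [mul_comm, Rat.mul_den_eq_num]
  have h1 : x = r * y := by rw [hr]; field_simp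
  have hcast : ((r.num.toNat : ℚ)) = ((r.num : ℤ) : ℚ) := by
    have := Int.toNat_of_nonneg hrnum.le
    exact_mod_cast congrArg (fun z : ℤ => (z : ℚ)) this
  rw [h1, hcast, ← key]
  ring

lemma same_sign_mem {Q : Set (Gz l)} (hQ : IsPositiveCone Q) {g₀ h : Gz l}
    (hg₀ : g₀ ∈ Q) (hratio : 0 < τ l hl h / τ l hl g₀) : h ∈ Q := by
  have hg₀1 : g₀ ≠ 1 := fun hc => hQ.2.2.2 (hc ▸ hg₀)
  have hτg₀ : τ l hl g₀ ≠ 0 := (τ_ne_iff l hl g₀).mpr hg₀1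
  have hτh : τ l hl h ≠ 0 := by
    intro hc; rw [hc] at hratio; simp at hratio
  have hh1 : h ≠ 1 := (τ_ne_iff l hl h).mp hτh
  obtain ⟨p, q, hp, hq, hpq⟩ : ∃ p q : ℕ, 0 < p ∧ 0 < q ∧
      (q : ℚ) * τ l hl h = (p : ℚ) * τ l hl g₀ := by
    rcases lt_or_gt_of_ne hτg₀ with hneg | hpos
    · have hhneg : τ l hl h < 0 := by
        by_contra hc
        push_neg at hc
        have : τ l hl h / τ l hl g₀ ≤ 0 := div_nonpos_of_nonneg_of_nonpos
          (lt_of_le_of_ne hc (Ne.symm hτh)).le hneg.le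
        linarith
      obtain ⟨p, q, hp, hq, hpq⟩ := ratio_nat (neg_pos.mpr hhneg) (neg_pos.mpr hneg)
      exact ⟨p, q, hp, hq, by linarith⟩
    · have hhpos : 0 < τ l hl h := by
        by_contra hc
        push_neg at hc
        have : τ l hl h / τ l hl g₀ ≤ 0 := div_nonpos_of_nonpos_of_nonneg hc hpos.le
        linarith
      exact ratio_nat hhpos hpos
  have heq : h ^ q = g₀ ^ p := by
    apply τ_inj l hl
    rw [τ_pow, τ_pow, hpq]
  by_contra hc
  rcases hQ.2.1 h with h1 | h2 | h3
  · exact hc h1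
  · have hinvq : (h ^ q)⁻¹ ∈ Q := by
      rw [← inv_pow]
      exact cone_pow hQ h2 hq
    exact hQ.2.2.1 _ (heq ▸ cone_pow hQ hg₀ hp) hinvq
  · exact hh1 h3


lemma cone_P1 : IsPositiveCone {g : Gz l | 0 < τ l hl g} := by
  refine ⟨?_, ?_, ?_, ?_⟩
  · intro a ha b hb
    show 0 < τ l hl (a * b)
    rw [τ_mul]
    exact add_pos ha hb
  · intro g
    rcases lt_trichotomy (τ l hl g) 0 with h | h | h
    · right; left; show 0 < τ l hl g⁻¹; rw [τ_inv]; linarith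
    · right; right
      exact τ_inj l hl (h.trans (τ_one l hl).symm)
    · left; exact h
  · intro g hg hc
    have : 0 < τ l hl g⁻¹ := hc
    rw [τ_inv] at this
    have : 0 < τ l hl g := hg
    linarith
  · show ¬ (0 < τ l hl 1)
    rw [τ_one]; simp

lemma cone_P2 : IsPositiveCone {g : Gz l | τ l hl g < 0} := by
  refine ⟨?_, ?_, ?_, ?_⟩
  · intro a ha b hb
    show τ l hl (a * b) < 0
    rw [τ_mul]
    exact add_neg ha hb
  · intro g
    rcases lt_trichotomy (τ l hl g) 0 with h | h | h
    · left; exact h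
    · right; right
      exact τ_inj l hl (h.trans (τ_one l hl).symm)
    · right; left; show τ l hl g⁻¹ < 0; rw [τ_inv]; linarith
  · intro g hg hc
    have h1 : τ l hl g⁻¹ < 0 := hc
    rw [τ_inv] at h1
    have : τ l hl g < 0 := hg
    linarith
  · show ¬ (τ l hl 1 < 0)
    rw [τ_one]; simp

lemma cone_classify {Q : Set (Gz l)} (hQ : IsPositiveCone Q) :
    Q = {g : Gz l | 0 < τ l hl g} ∨ Q = {g : Gz l | τ l hl g < 0} := by
  have hne : gz l 0 ≠ 1 := by
    intro hc
    have := τ_gz0 l hl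
    rw [hc, τ_one] at this
    norm_num at this
  obtain ⟨g₀, hg₀⟩ : ∃ g₀, g₀ ∈ Q := by
    rcases hQ.2.1 (gz l 0) with h | h | h
    · exact ⟨_, h⟩
    · exact ⟨_, h⟩
    · exact absurd h hne
  have hg₀1 : g₀ ≠ 1 := fun hc => hQ.2.2.2 (hc ▸ hg₀)
  have hτg₀ : τ l hl g₀ ≠ 0 := (τ_ne_iff l hl g₀).mpr hg₀1
  have main : ∀ g ∈ Q, (τ l hl g) * (τ l hl g₀) > 0 := by
    intro g hg
    have hg1 : g ≠ 1 := fun hc => hQ.2.2.2 (hc ▸ hg)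
    have hτg : τ l hl g ≠ 0 := (τ_ne_iff l hl g).mpr hg1
    by_contra hc
    push_neg at hc
    have hlt : (τ l hl g) * (τ l hl g₀) < 0 :=
      lt_of_le_of_ne hc (mul_ne_zero hτg hτg₀)
    have hratio : 0 < τ l hl g⁻¹ / τ l hl g₀ := by
      rw [τ_inv]
      rcases lt_or_gt_of_ne hτg₀ with h | h
      · have : 0 < τ l hl g := by nlinarith
        exact div_pos_of_neg_of_neg (by linarith) h
      · have : τ l hl g < 0 := by nlinarith
        exact div_pos (by linarith) h
    have := same_sign_mem l hl hQ hg₀ hratio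
    exact hQ.2.2.1 g hg this
  rcases lt_or_gt_of_ne hτg₀ with hneg | hpos
  · right
    apply Set.eq_of_subset_of_subset
    · intro g hg
      have := main g hg
      show τ l hl g < 0
      nlinarith
    · intro g hg
      have hg' : τ l hl g < 0 := hg
      exact same_sign_mem l hl hQ hg₀ (div_pos_of_neg_of_neg hg' hneg)
  · left
    apply Set.eq_of_subset_of_subset
    · intro g hg
      have := main g hg
      show 0 < τ l hl g
      nlinarith
    · intro g hg
      have hg' : 0 < τ l hl g := hg
      exact same_sign_mem l hl hQ hg₀ (div_pos hg' hpos)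

lemma cones_ne : {g : Gz l | 0 < τ l hl g} ≠ {g : Gz l | τ l hl g < 0} := by
  intro hc
  have h0 : gz l 0 ∈ {g : Gz l | 0 < τ l hl g} := by
    show 0 < τ l hl (gz l 0)
    rw [τ_gz0]; norm_num
  rw [hc] at h0
  have : τ l hl (gz l 0) < 0 := h0
  rw [τ_gz0] at this
  norm_num at this

end Stmt16Aux


theorem stmt16 (l : ℕ) (hl : 0 < l) :
    -- `Gz l` is isomorphic to `Multiplicative ℤ[1/l]`, via `gₙ ↦ 1 / lⁿ`
    (∃ e : Gz l ≃* Multiplicative (zInvl l hl),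
      ∀ n : ℤ, ((Multiplicative.toAdd (e (gz l n)) : zInvl l hl) : ℚ) =
        1 / (l : ℚ) ^ n) ∧
    -- if `l ≥ 2` then `Gz l` has exactly two positive cones
    (2 ≤ l → ∃ P₁ P₂ : Set (Gz l), P₁ ≠ P₂ ∧
      IsPositiveCone P₁ ∧ IsPositiveCone P₂ ∧
      ∀ Q : Set (Gz l), IsPositiveCone Q → Q = P₁ ∨ Q = P₂) := by
  constructor
  · exact ⟨Stmt16Aux.e l hl, Stmt16Aux.e_gz l hl⟩
  · intro _
    exact ⟨_, _, Stmt16Aux.cones_ne l hl, Stmt16Aux.cone_P1 l hl, Stmt16Aux.cone_P2 l hl,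
      fun Q hQ => Stmt16Aux.cone_classify l hl hQ⟩
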